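/- Let n ≥ 1 and let α, β : ℝ → M_n(ℂ) be matrix-valued functions such that α is differentiable and satisfies the Lax equation α′(t) = α(t)β(t) − β(t)α(t) for every t ∈ ℝ. Then the characteristic polynomial of α(t) is independent of t: for all t ∈ ℝ, charpoly(α(t)) = charpoly(α(0)). (Hence the spectral curve det(η − α(t)) = 0 is independent of t.) -/

import Mathlib

open Matrix Polynomial

private lemma eval_charpoly_eq' {n : ℕ} (A : Matrix (Fin n) (Fin n) ℂ) (z : ℂ) :
    (A.charpoly).eval z = (z • (1 : Matrix (Fin n) (Fin n) ℂ) - A).det := by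
  rw [Matrix.charpoly, ← Polynomial.coe_evalRingHom, RingHom.map_det]
  congr 1
  ext i j
  by_cases h : i = j
  · subst h
    simp [charmatrix_apply_eq, Matrix.one_apply, Matrix.smul_apply]
  · simp [charmatrix_apply_ne _ _ _ h, Matrix.one_apply_ne h, Matrix.smul_apply]

private lemma sum_det_updateColumn_eq_trace {n : ℕ} (A B : Matrix (Fin n) (Fin n) ℂ) :
    ∑ i, (A.updateCol i fun k => B k i).det = (Matrix.adjugate A * B).trace := by
  simp_rw [← Matrix.cramer_apply, Matrix.cramer_eq_adjugate_mulVec]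
  simp [Matrix.trace, Matrix.diag, Matrix.mul_apply, Matrix.mulVec, dotProduct]

/-- Jacobi's formula: derivative of the determinant. -/
private lemma hasDerivAt_det' {n : ℕ} {M : ℝ → Matrix (Fin n) (Fin n) ℂ}
    {N : Matrix (Fin n) (Fin n) ℂ} {t : ℝ}
    (h : ∀ i j, HasDerivAt (fun s => M s i j) (N i j) t) :
    HasDerivAt (fun s => (M s).det) ((Matrix.adjugate (M t) * N).trace) t := by
  have key : HasDerivAt (fun s => (M s).det)
      (∑ σ : Equiv.Perm (Fin n), ((Equiv.Perm.sign σ : ℤ) : ℂ) *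
        ∑ i, (∏ j ∈ Finset.univ.erase i, M t (σ j) j) • N (σ i) i) t := by
    simp_rw [Matrix.det_apply']
    exact HasDerivAt.fun_sum fun σ _ =>
      (HasDerivAt.fun_finsetProd (fun i _ => h (σ i) i)).const_mul _
  have eq1 : (∑ σ : Equiv.Perm (Fin n), ((Equiv.Perm.sign σ : ℤ) : ℂ) *
        ∑ i, (∏ j ∈ Finset.univ.erase i, M t (σ j) j) • N (σ i) i)
      = (Matrix.adjugate (M t) * N).trace := by
    rw [← sum_det_updateColumn_eq_trace (M t) N]
    simp_rw [Finset.mul_sum]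
    rw [Finset.sum_comm]
    refine Finset.sum_congr rfl fun i _ => ?_
    rw [Matrix.det_apply']
    refine Finset.sum_congr rfl fun σ _ => ?_
    congr 1
    rw [← Finset.prod_erase_mul Finset.univ _ (Finset.mem_univ i), smul_eq_mul]
    congr 1
    · refine Finset.prod_congr rfl fun j hj => ?_
      rw [Matrix.updateCol_ne (Finset.ne_of_mem_erase hj)]
    · rw [Matrix.updateCol_self]
  rwa [eq1] at key

private lemma trace_adjugate_comm_zero {n : ℕ} (M B : Matrix (Fin n) (Fin n) ℂ) :
    (Matrix.adjugate M * (M * B - B * M)).trace = 0 := by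
  simp only [mul_sub, Matrix.trace_sub, ← mul_assoc]
  rw [Matrix.adjugate_mul, Matrix.trace_mul_cycle (Matrix.adjugate M) B M,
    Matrix.mul_adjugate, sub_self]

/-- If a differentiable family of matrices `α : ℝ → Mₙ(ℂ)` satisfies the Lax equation
`α′ = αβ − βα`, then the characteristic polynomial of `α t` is independent of `t`. -/
theorem charpoly_const_of_lax
    {n : ℕ} (hn : 1 ≤ n)
    (α β : ℝ → Matrix (Fin n) (Fin n) ℂ)
    (hlax : ∀ (t : ℝ) (i j : Fin n),
      HasDerivAt (fun s => α s i j) ((α t * β t - β t * α t) i j) t) :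
    ∀ t : ℝ, (α t).charpoly = (α 0).charpoly := by
  intro t
  apply Polynomial.funext
  intro z
  rw [eval_charpoly_eq', eval_charpoly_eq']
  have hg : ∀ s : ℝ,
      HasDerivAt (fun u => (z • (1 : Matrix (Fin n) (Fin n) ℂ) - α u).det) 0 s := by
    intro s
    set Ms := z • (1 : Matrix (Fin n) (Fin n) ℂ) - α s with hMs
    have hN : Ms * β s - β s * Ms = -(α s * β s - β s * α s) := by
      rw [hMs]
      simp only [sub_mul, mul_sub, Matrix.smul_mul, Matrix.mul_smul, one_mul, mul_one]
      abel
    have hM : ∀ i j, HasDerivAt (fun u => (z • (1 : Matrix (Fin n) (Fin n) ℂ) - α u) i j)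
        ((Ms * β s - β s * Ms) i j) s := by
      intro i j
      rw [hN]
      simpa using ((hlax s i j).const_sub ((z • (1 : Matrix (Fin n) (Fin n) ℂ)) i j))
    have := hasDerivAt_det' hM
    rwa [show (Matrix.adjugate Ms * (Ms * β s - β s * Ms)).trace = 0 from
      trace_adjugate_comm_zero Ms (β s)] at this
  have hconst := is_const_of_deriv_eq_zero
    (fun s => (hg s).differentiableAt) (fun s => (hg s).deriv)
  exact hconst t 0
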